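/- Let r ≥ 1 be an integer and let G be a finite graph each of whose connected components has diameter at most r. Then for any two distance-r dominating sets D_s, D_t of G with |D_s| = |D_t|, there exists a TS-sequence in G from D_s to D_t if and only if for every connected component C of G one has |D_s ∩ V(C)| = |D_t ∩ V(C)|. -/
import Mathlib


/-- `D` is a distance-`r` dominating set of `G`. -/
def IsDrDS {V : Type*} (G : SimpleGraph V) (r : ℕ) (D : Set V) : Prop :=
  ∀ v : V, ∃ u ∈ D, G.Reachable u v ∧ G.dist u v ≤ r

/-- A TS-sequence of length `q` of distance-`r` dominating sets of `G`. -/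
def IsTSSeq {V : Type*} (G : SimpleGraph V) (r q : ℕ)
    (Dseq : Fin (q + 1) → Finset V) : Prop :=
  (∀ i, IsDrDS G r ↑(Dseq i)) ∧
  ∀ i : Fin q, ∃ x ∈ Dseq i.castSucc, ∃ y, y ∉ Dseq i.castSucc ∧ G.Adj x y ∧
    (↑(Dseq i.succ) : Set V) = (↑(Dseq i.castSucc) \ {x}) ∪ {y}

open Relation SimpleGraph

section Aux

variable {V : Type*} [Fintype V] {G : SimpleGraph V} {r : ℕ}

/-- A single token-sliding step. -/
def TStep (G : SimpleGraph V) (D D' : Finset V) : Prop :=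
  ∃ x ∈ D, ∃ y, y ∉ D ∧ G.Adj x y ∧ (↑D' : Set V) = (↑D \ {x}) ∪ {y}

/-- Per-component count. -/
noncomputable def cnt (G : SimpleGraph V) (D : Finset V) (c : G.ConnectedComponent) : ℕ :=
  ((↑D : Set V) ∩ {v | G.connectedComponentMk v = c}).ncard

lemma TStep.mem_iff {D D' : Finset V} (h : TStep G D D') :
    ∃ x ∈ D, ∃ y, y ∉ D ∧ G.Adj x y ∧ ∀ v, v ∈ D' ↔ (v ∈ D ∧ v ≠ x) ∨ v = y := by
  obtain ⟨x, hx, y, hy, hxy, hset⟩ := h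
  refine ⟨x, hx, y, hy, hxy, fun v => ?_⟩
  have := Set.ext_iff.mp hset v
  simp only [Set.mem_union, Set.mem_diff, Set.mem_singleton_iff, Finset.mem_coe] at this
  tauto

lemma TStep.drds (hdiam : ∀ u v : V, G.Reachable u v → G.dist u v ≤ r)
    {D D' : Finset V} (h : TStep G D D') (hD : IsDrDS G r ↑D) : IsDrDS G r ↑D' := by
  obtain ⟨x, hx, y, hy, hxy, hmem⟩ := h.mem_iff
  intro v
  obtain ⟨u, hu, hru, -⟩ := hD v
  by_cases hux : u = x
  · have hry : G.Reachable y v := (hxy.symm.reachable).trans (hux ▸ hru)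
    exact ⟨y, by simpa using (hmem y).mpr (Or.inr rfl), hry, hdiam _ _ hry⟩
  · exact ⟨u, by simpa using (hmem u).mpr (Or.inl ⟨by simpa using hu, hux⟩),
      hru, hdiam _ _ hru⟩

lemma TStep.cnt_eq {D D' : Finset V} (h : TStep G D D') (c : G.ConnectedComponent) :
    cnt G D' c = cnt G D c := by
  obtain ⟨x, hx, y, hy, hxy, hset⟩ := h
  have hcc : G.connectedComponentMk y = G.connectedComponentMk x :=
    ConnectedComponent.sound hxy.symm.reachable
  unfold cnt
  by_cases hc : G.connectedComponentMk x = c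
  · have hyc : G.connectedComponentMk y = c := hcc.trans hc
    have hEq : (↑D' : Set V) ∩ {v | G.connectedComponentMk v = c}
        = insert y (((↑D : Set V) ∩ {v | G.connectedComponentMk v = c}) \ {x}) := by
      rw [hset]
      ext v
      simp only [Set.mem_inter_iff, Set.mem_union, Set.mem_diff, Set.mem_singleton_iff,
        Set.mem_insert_iff, Set.mem_setOf_eq]
      constructor
      · rintro ⟨h1 | h1, h2⟩
        · exact Or.inr ⟨⟨h1.1, h2⟩, h1.2⟩
        · exact Or.inl h1
      · rintro (rfl | ⟨⟨h1, h2⟩, h3⟩)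
        · exact ⟨Or.inr rfl, hyc⟩
        · exact ⟨Or.inl ⟨h1, h3⟩, h2⟩
    rw [hEq, Set.ncard_insert_of_notMem (by simp [hy]),
      Set.ncard_diff_singleton_add_one
        (show x ∈ (↑D : Set V) ∩ {v | G.connectedComponentMk v = c} from ⟨by simpa using hx, hc⟩)]
  · have hyc : G.connectedComponentMk y ≠ c := fun hh => hc (hcc.symm.trans hh)
    have hEq : (↑D' : Set V) ∩ {v | G.connectedComponentMk v = c}
        = (↑D : Set V) ∩ {v | G.connectedComponentMk v = c} := by
      rw [hset]
      ext v
      simp only [Set.mem_inter_iff, Set.mem_union, Set.mem_diff, Set.mem_singleton_iff,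
        Set.mem_setOf_eq]
      constructor
      · rintro ⟨h1 | rfl, h2⟩
        · exact ⟨h1.1, h2⟩
        · exact absurd h2 hyc
      · rintro ⟨h1, h2⟩
        exact ⟨Or.inl ⟨h1, fun hvx => hc (hvx ▸ h2)⟩, h2⟩
    rw [hEq]

lemma rtg_cnt_eq {D D' : Finset V} (h : ReflTransGen (TStep G) D D')
    (c : G.ConnectedComponent) : cnt G D' c = cnt G D c := by
  induction h with
  | refl => rfl
  | tail _ hstep ih => rw [hstep.cnt_eq c, ih]

/-- Slide a token from the walk onto its unoccupied start. -/
lemma slide {D : Finset V} [DecidableEq V] :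
    ∀ {b a : V} (p : G.Walk b a), b ∉ D → a ∈ D →
    ∃ x ∈ D, x ∈ p.support ∧ ReflTransGen (TStep G) D (insert b (D.erase x)) := by
  intro b a p
  induction p with
  | nil => intro hb ha; exact absurd ha hb
  | @cons b c a h q ih =>
    intro hb ha
    by_cases hc : c ∈ D
    · refine ⟨c, hc, by simp, ReflTransGen.single ?_⟩
      refine ⟨c, hc, b, hb, h.symm, ?_⟩
      ext v
      simp only [Finset.coe_insert, Set.mem_insert_iff, Finset.coe_erase, Set.mem_diff,
        Finset.mem_coe, Set.mem_union, Set.mem_singleton_iff]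
      tauto
    · obtain ⟨x, hxD, hxsup, hR⟩ := ih hc ha
      have hbc : b ≠ c := h.ne
      have hbx : b ∉ insert c (D.erase x) := by
        simp [Finset.mem_insert, Finset.mem_erase, hbc, hb]
      refine ⟨x, hxD, by simp [hxsup], hR.tail ?_⟩
      refine ⟨c, by simp, b, hbx, h.symm, ?_⟩
      ext v
      simp only [Finset.coe_insert, Set.mem_insert_iff, Finset.coe_erase, Set.mem_diff,
        Finset.mem_coe, Set.mem_union, Set.mem_singleton_iff, Finset.mem_insert,
        Finset.mem_erase]
      constructor
      · rintro (rfl | ⟨h1, h2⟩)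
        · exact Or.inr rfl
        · exact Or.inl ⟨Or.inr ⟨h1, h2⟩, fun hvc => hc (hvc ▸ h1)⟩
      · rintro (⟨rfl | ⟨h1, h2⟩, h3⟩ | rfl)
        · exact absurd rfl h3
        · exact Or.inr ⟨h1, h2⟩
        · exact Or.inl rfl

/-- Key move: strictly decrease `(B \ D).card` by a TS-reachable modification. -/
lemma move [DecidableEq V] (B : Finset V) :
    ∀ d : ℕ, ∀ D : Finset V, (∀ c, cnt G D c = cnt G B c) →
    ∀ a b : V, a ∈ D → a ∉ B → b ∈ B → b ∉ D → G.Reachable b a → G.dist b a ≤ d →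
    ∃ D', ReflTransGen (TStep G) D D' ∧ (B \ D').card < (B \ D).card := by
  intro d
  induction d with
  | zero =>
    intro D _ a b haD haB hbB hbD hre hd
    have hne : b ≠ a := fun hh => hbD (hh ▸ haD)
    exact absurd hd (by have := hre.pos_dist_of_ne hne; omega)
  | succ d IH =>
    intro D hbal a b haD haB hbB hbD hre hd
    obtain ⟨p, hp⟩ := hre.exists_walk_length_eq_dist
    obtain ⟨x, hxD, hxsup, hR⟩ := slide p hbD haD
    set D₁ : Finset V := insert b (D.erase x) with hD₁
    have hxb : x ≠ b := fun hh => hbD (hh ▸ hxD)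
    by_cases hxB : x ∈ B
    · -- x was already a target vertex; recurse with pair (a, x), distance shrinks
      have hxa : x ≠ a := fun hh => haB (hh ▸ hxB)
      have hbalD₁ : ∀ c, cnt G D₁ c = cnt G B c := fun c => (rtg_cnt_eq hR c).trans (hbal c)
      have haD₁ : a ∈ D₁ := by
        simp only [hD₁, Finset.mem_insert, Finset.mem_erase]
        exact Or.inr ⟨hxa.symm, haD⟩
      have hxD₁ : x ∉ D₁ := by
        simp [hD₁, Finset.mem_insert, Finset.mem_erase, hxb]
      -- distance bound
      have htake := p.take_spec hxsup
      have hlen : (p.takeUntil x hxsup).length + (p.dropUntil x hxsup).length = p.length := by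
        conv_rhs => rw [← htake]
        rw [SimpleGraph.Walk.length_append]
      have hbxpos : (p.takeUntil x hxsup).length ≠ 0 := fun h0 =>
        hxb (SimpleGraph.Walk.eq_of_length_eq_zero h0).symm
      have hre' : G.Reachable x a := (p.dropUntil x hxsup).reachable
      have hdxa : G.dist x a ≤ d := by
        have h1 := SimpleGraph.dist_le (p.dropUntil x hxsup)
        omega
      obtain ⟨D'', hR'', hcard''⟩ := IH D₁ hbalD₁ a x haD₁ haB hxB hxD₁ hre' hdxa
      have hcardeq : (B \ D₁).card = (B \ D).card := by
        have hEq : B \ D₁ = insert x ((B \ D).erase b) := by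
          ext v
          simp only [hD₁, Finset.mem_sdiff, Finset.mem_insert, Finset.mem_erase, not_or,
            not_and]
          push_neg
          constructor
          · rintro ⟨h1, h2, h3⟩
            rcases eq_or_ne v x with rfl | hvx
            · exact Or.inl rfl
            · exact Or.inr ⟨h2, h1, h3 hvx⟩
          · rintro (rfl | ⟨h1, h2, h3⟩)
            · exact ⟨hxB, hxb, fun hxx => absurd rfl hxx⟩
            · exact ⟨h2, h1, fun _ => h3⟩
        rw [hEq, Finset.card_insert_of_notMem (by simp [hxD]),
          Finset.card_erase_of_mem (by simp [hbB, hbD])]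
        have : 1 ≤ (B \ D).card := Finset.card_pos.mpr ⟨b, by simp [hbB, hbD]⟩
        omega
      exact ⟨D'', hR.trans hR'', by omega⟩
    · -- x is not a target vertex: net progress
      refine ⟨D₁, hR, Finset.card_lt_card ?_⟩
      constructor
      · intro v hv
        simp only [hD₁, Finset.mem_sdiff, Finset.mem_insert, Finset.mem_erase, not_or,
          not_and] at hv ⊢
        push_neg at hv
        obtain ⟨h1, h2, h3⟩ := hv
        have hvx : v ≠ x := fun hh => hxB (hh ▸ h1)
        exact ⟨h1, h3 hvx⟩
      · intro hsub
        have hb1 : b ∈ B \ D := by simp [hbB, hbD]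
        have := hsub hb1
        simp [hD₁] at this

/-- Reach the target set `B` from any balanced configuration. -/
lemma reach_target [DecidableEq V] (B : Finset V) :
    ∀ k : ℕ, ∀ D : Finset V, (∀ c, cnt G D c = cnt G B c) → (B \ D).card ≤ k →
    ReflTransGen (TStep G) D B := by
  intro k
  induction k with
  | zero =>
    intro D hbal hk
    have hBD : B ⊆ D := by
      rw [← Finset.sdiff_eq_empty_iff_subset]
      exact Finset.card_eq_zero.mp (by omega)
    have hDB : D ⊆ B := by
      intro a haD
      by_contra haB
      set c := G.connectedComponentMk a with hc
      have hsub : insert a ((↑B : Set V) ∩ {v | G.connectedComponentMk v = c})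
          ⊆ (↑D : Set V) ∩ {v | G.connectedComponentMk v = c} := by
        rintro v (rfl | ⟨h1, h2⟩)
        · exact ⟨by simpa using haD, rfl⟩
        · exact ⟨by simpa using hBD (by simpa using h1), h2⟩
      have h1 : ((↑B : Set V) ∩ {v | G.connectedComponentMk v = c}).ncard + 1
          ≤ ((↑D : Set V) ∩ {v | G.connectedComponentMk v = c}).ncard := by
        rw [← Set.ncard_insert_of_notMem
          (fun hh => haB (by simpa using hh.1)) (Set.toFinite _)]
        exact Set.ncard_le_ncard hsub (Set.toFinite _)
      have h2 := hbal c
      unfold cnt at h2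
      omega
    have : D = B := Finset.Subset.antisymm hDB hBD
    exact this ▸ ReflTransGen.refl
  | succ k IH =>
    intro D hbal hk
    by_cases hBD : B ⊆ D
    · have hDB : D ⊆ B := by
        intro a haD
        by_contra haB
        set c := G.connectedComponentMk a with hc
        have hsub : insert a ((↑B : Set V) ∩ {v | G.connectedComponentMk v = c})
            ⊆ (↑D : Set V) ∩ {v | G.connectedComponentMk v = c} := by
          rintro v (rfl | ⟨h1, h2⟩)
          · exact ⟨by simpa using haD, rfl⟩
          · exact ⟨by simpa using hBD (by simpa using h1), h2⟩
        have h1 : ((↑B : Set V) ∩ {v | G.connectedComponentMk v = c}).ncard + 1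
            ≤ ((↑D : Set V) ∩ {v | G.connectedComponentMk v = c}).ncard := by
          rw [← Set.ncard_insert_of_notMem
            (fun hh => haB (by simpa using hh.1)) (Set.toFinite _)]
          exact Set.ncard_le_ncard hsub (Set.toFinite _)
        have h2 := hbal c
        unfold cnt at h2
        omega
      have : D = B := Finset.Subset.antisymm hDB hBD
      exact this ▸ ReflTransGen.refl
    · obtain ⟨b, hbB, hbD⟩ := Finset.not_subset.mp hBD
      set c := G.connectedComponentMk b with hc
      have hex : ∃ a ∈ D, G.connectedComponentMk a = c ∧ a ∉ B := by
        by_contra hcon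
        push_neg at hcon
        have hsub : (↑D : Set V) ∩ {v | G.connectedComponentMk v = c}
            ⊆ ((↑B : Set V) ∩ {v | G.connectedComponentMk v = c}) \ {b} := by
          rintro v ⟨h1, h2⟩
          have hvB := hcon v (by simpa using h1) h2
          exact ⟨⟨by simpa using hvB, h2⟩, fun hvb => hbD (by simpa using hvb ▸ h1)⟩
        have h1 : ((↑D : Set V) ∩ {v | G.connectedComponentMk v = c}).ncard
            ≤ (((↑B : Set V) ∩ {v | G.connectedComponentMk v = c}) \ {b}).ncard :=
          Set.ncard_le_ncard hsub (Set.toFinite _)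
        have h2 := Set.ncard_diff_singleton_add_one
          (show b ∈ (↑B : Set V) ∩ {v | G.connectedComponentMk v = c} from
            ⟨by simpa using hbB, rfl⟩) (Set.toFinite _)
        have h3 := hbal c
        unfold cnt at h3
        omega
      obtain ⟨a, haD, hacc, haB⟩ := hex
      have hre : G.Reachable b a := (ConnectedComponent.exact hacc).symm
      obtain ⟨D', hR, hlt⟩ := move B (G.dist b a) D hbal a b haD haB hbB hbD hre le_rfl
      have hbal' : ∀ c', cnt G D' c' = cnt G B c' :=
        fun c' => (rtg_cnt_eq hR c').trans (hbal c')
      exact hR.trans (IH D' hbal' (by omega))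

/-- Convert a reflexive-transitive chain of token steps into a TS-sequence. -/
lemma seq_of_rtg (hdiam : ∀ u v : V, G.Reachable u v → G.dist u v ≤ r)
    {Ds Dt : Finset V} (h : ReflTransGen (TStep G) Ds Dt) (hDs : IsDrDS G r ↑Ds) :
    ∃ (q : ℕ) (Dseq : Fin (q + 1) → Finset V),
      IsTSSeq G r q Dseq ∧ Dseq 0 = Ds ∧ Dseq (Fin.last q) = Dt := by
  induction h with
  | refl =>
    exact ⟨0, fun _ => Ds, ⟨fun _ => hDs, fun i => i.elim0⟩, rfl, rfl⟩
  | @tail b Dt' hab hstep ih =>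
    obtain ⟨q, Dseq, ⟨hdr, hstp⟩, h0, hl⟩ := ih
    refine ⟨q + 1, Fin.snoc Dseq Dt', ⟨?_, ?_⟩, ?_, ?_⟩
    · intro i
      refine Fin.lastCases ?_ ?_ i
      · rw [Fin.snoc_last]
        exact TStep.drds hdiam hstep (hl ▸ hdr (Fin.last q))
      · intro j
        rw [Fin.snoc_castSucc]
        exact hdr j
    · intro i
      refine Fin.lastCases ?_ ?_ i
      · have e1 : (Fin.snoc Dseq Dt' : Fin (q + 2) → Finset V) ((Fin.last q).castSucc) = b := by
          rw [Fin.snoc_castSucc, hl]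
        have e2 : (Fin.snoc Dseq Dt' : Fin (q + 2) → Finset V) ((Fin.last q).succ) = Dt' := by
          rw [Fin.succ_last, Fin.snoc_last]
        rw [e1, e2]
        exact hstep
      · intro j
        have e1 : (Fin.snoc Dseq Dt' : Fin (q + 2) → Finset V) ((j.castSucc).castSucc)
            = Dseq j.castSucc := by rw [Fin.snoc_castSucc]
        have e2 : (Fin.snoc Dseq Dt' : Fin (q + 2) → Finset V) ((j.castSucc).succ)
            = Dseq j.succ := by rw [Fin.succ_castSucc, Fin.snoc_castSucc]
        rw [e1, e2]
        exact hstp j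
    · have : (0 : Fin (q + 2)) = (0 : Fin (q + 1)).castSucc := by simp
      rw [this, Fin.snoc_castSucc, h0]
    · rw [Fin.snoc_last]

end Aux

theorem stmt13 {V : Type*} [Fintype V] (G : SimpleGraph V) (r : ℕ) (hr : 1 ≤ r)
    (hdiam : ∀ u v : V, G.Reachable u v → G.dist u v ≤ r)
    (Ds Dt : Finset V) (hDs : IsDrDS G r ↑Ds) (hDt : IsDrDS G r ↑Dt)
    (hcard : Ds.card = Dt.card) :
    (∃ (q : ℕ) (Dseq : Fin (q + 1) → Finset V),
        IsTSSeq G r q Dseq ∧ Dseq 0 = Ds ∧ Dseq (Fin.last q) = Dt) ↔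
    (∀ c : G.ConnectedComponent,
        ((↑Ds : Set V) ∩ {v | G.connectedComponentMk v = c}).ncard =
        ((↑Dt : Set V) ∩ {v | G.connectedComponentMk v = c}).ncard) := by
  constructor
  · rintro ⟨q, Dseq, ⟨hdr, hstp⟩, h0, hl⟩ c
    have key : ∀ i : Fin (q + 1), cnt G (Dseq i) c = cnt G Ds c := by
      intro i
      induction i using Fin.induction with
      | zero => rw [h0]
      | succ j ih =>
        have hstep : TStep G (Dseq j.castSucc) (Dseq j.succ) := hstp j
        rw [hstep.cnt_eq c, ih]
    have := key (Fin.last q)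
    rw [hl] at this
    exact this.symm
  · intro hbal
    classical
    have hR : Relation.ReflTransGen (TStep G) Ds Dt :=
      reach_target Dt (Dt \ Ds).card Ds (fun c => hbal c) le_rfl
    exact seq_of_rtg hdiam hR hDs
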